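/- With g the pointwise bilinear form on ℝ⁵ defined by declaring the frame (X, ∂_u, V₁, V₂, 2∂_t+∂_z) to have Gram matrix [[0,1,0,0,0],[1,0,0,0,0],[0,0,1,0,0],[0,0,0,1,0],[0,0,0,0,1]] (X as in Thurston's construction), the 1-form v ↦ g(X, v) equals du at every point, and in particular it is a closed 1-form. -/

import Mathlib

open Real Matrix

/-- Coordinate vector of Thurston's vector field
`X = sin(2u) V₁ + 2sin²(u) ∂_t - cos²(u) ∂_z` at `p = (x,y,z,t,u)`. -/
noncomputable def Xvec (p : Fin 5 → ℝ) : Fin 5 → ℝ :=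
  ![Real.sin (2 * p 4) * Real.cos (p 3),
    Real.sin (2 * p 4) * Real.sin (p 3),
    Real.sin (2 * p 4) * (p 0 * Real.sin (p 3)) - Real.cos (p 4) ^ 2,
    2 * Real.sin (p 4) ^ 2,
    0]

/-- The matrix whose columns are the frame `(X, ∂_u, V₁, V₂, 2∂_t + ∂_z)`
at `p = (x,y,z,t,u)`. -/
noncomputable def frameMat (p : Fin 5 → ℝ) : Matrix (Fin 5) (Fin 5) ℝ :=
  (Matrix.of
    ![Xvec p,
      ![0, 0, 0, 0, 1],
      ![Real.cos (p 3), Real.sin (p 3), p 0 * Real.sin (p 3), 0, 0],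
      ![-Real.sin (p 3), Real.cos (p 3), p 0 * Real.cos (p 3), 0, 0],
      ![0, 0, 1, 2, 0]])ᵀ

/-- The Gram matrix prescribed for the frame `(X, ∂_u, V₁, V₂, 2∂_t+∂_z)`. -/
noncomputable def J₀ : Matrix (Fin 5) (Fin 5) ℝ :=
  !![0, 1, 0, 0, 0;
     1, 0, 0, 0, 0;
     0, 0, 1, 0, 0;
     0, 0, 0, 1, 0;
     0, 0, 0, 0, 1]

/-- The coordinate matrix of the metric `g` whose matrix in the frame
`(X, ∂_u, V₁, V₂, 2∂_t+∂_z)` is `J₀`. -/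
noncomputable def gMat (p : Fin 5 → ℝ) : Matrix (Fin 5) (Fin 5) ℝ :=
  ((frameMat p)⁻¹)ᵀ * J₀ * (frameMat p)⁻¹

/-- `frameMat` written in explicit row form. -/
noncomputable def Fm (p : Fin 5 → ℝ) : Matrix (Fin 5) (Fin 5) ℝ :=
  !![Real.sin (2 * p 4) * Real.cos (p 3), 0, Real.cos (p 3), -Real.sin (p 3), 0;
     Real.sin (2 * p 4) * Real.sin (p 3), 0, Real.sin (p 3), Real.cos (p 3), 0;
     Real.sin (2 * p 4) * (p 0 * Real.sin (p 3)) - Real.cos (p 4) ^ 2, 0,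
       p 0 * Real.sin (p 3), p 0 * Real.cos (p 3), 1;
     2 * Real.sin (p 4) ^ 2, 0, 0, 0, 2;
     0, 1, 0, 0, 0]

lemma frameMat_eq_Fm (p : Fin 5 → ℝ) : frameMat p = Fm p := by
  ext i j
  fin_cases i <;> fin_cases j <;>
    simp [frameMat, Fm, Xvec, Matrix.vecHead, Matrix.vecTail]

set_option maxHeartbeats 1000000 in
lemma frameMat_det (p : Fin 5 → ℝ) : (frameMat p).det = 2 := by
  rw [frameMat_eq_Fm, Fm]
  simp [Matrix.det_succ_row_zero, Fin.sum_univ_succ, Fin.succAbove,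
    Fin.castSucc, Fin.castAdd, Fin.castLE, Matrix.vecHead, Matrix.vecTail]
  ring_nf
  nlinarith [sin_sq_add_cos_sq (p 3), sin_sq_add_cos_sq (p 4)]

lemma frameMat_det_isUnit (p : Fin 5 → ℝ) : IsUnit (frameMat p).det := by
  rw [frameMat_det]; norm_num

lemma frameMat_col0 (p : Fin 5 → ℝ) :
    frameMat p *ᵥ ![(1:ℝ), 0, 0, 0, 0] = Xvec p := by
  funext i
  fin_cases i <;>
    simp [frameMat, Xvec, Matrix.mulVec, dotProduct, Fin.sum_univ_five,
      Matrix.vecHead, Matrix.vecTail]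

lemma e0_vecMul_J₀ :
    ![(1:ℝ), 0, 0, 0, 0] ᵥ* J₀ = ![0, 1, 0, 0, 0] := by
  funext j
  fin_cases j <;>
    simp [J₀, Matrix.vecMul, dotProduct, Fin.sum_univ_five]

lemma e4_vecMul_frameMat (p : Fin 5 → ℝ) :
    ![(0:ℝ), 0, 0, 0, 1] ᵥ* frameMat p = ![0, 1, 0, 0, 0] := by
  funext j
  fin_cases j <;>
    simp [frameMat, Xvec, Matrix.vecMul, dotProduct, Fin.sum_univ_five,
      Matrix.vecHead, Matrix.vecTail]

lemma Xflat_eq_du_pointwise (p v : Fin 5 → ℝ) :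
    Xvec p ⬝ᵥ (gMat p).mulVec v = v 4 := by
  have hu := frameMat_det_isUnit p
  have hinv : (frameMat p)⁻¹ * frameMat p = 1 := Matrix.nonsing_inv_mul _ hu
  have hinv' : frameMat p * (frameMat p)⁻¹ = 1 := Matrix.mul_nonsing_inv _ hu
  have key : Xvec p ᵥ* gMat p = ![(0:ℝ), 0, 0, 0, 1] := by
    have h1 : (frameMat p)⁻¹ *ᵥ Xvec p = ![(1:ℝ), 0, 0, 0, 0] := by
      rw [← frameMat_col0 p, Matrix.mulVec_mulVec, hinv, Matrix.one_mulVec]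
    calc Xvec p ᵥ* gMat p
        = ((Xvec p ᵥ* ((frameMat p)⁻¹)ᵀ) ᵥ* J₀) ᵥ* (frameMat p)⁻¹ := by
          rw [gMat, ← Matrix.vecMul_vecMul, ← Matrix.vecMul_vecMul]
      _ = ((![(1:ℝ), 0, 0, 0, 0]) ᵥ* J₀) ᵥ* (frameMat p)⁻¹ := by
          rw [Matrix.vecMul_transpose, h1]
      _ = ![(0:ℝ), 1, 0, 0, 0] ᵥ* (frameMat p)⁻¹ := by rw [e0_vecMul_J₀]
      _ = (![(0:ℝ), 0, 0, 0, 1] ᵥ* frameMat p) ᵥ* (frameMat p)⁻¹ := by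
          rw [e4_vecMul_frameMat]
      _ = ![(0:ℝ), 0, 0, 0, 1] := by
          rw [Matrix.vecMul_vecMul, hinv', Matrix.vecMul_one]
  rw [Matrix.dotProduct_mulVec, key]
  simp [dotProduct, Fin.sum_univ_five]

/-- The 1-form `v ↦ g(X,v)` equals `du` at every point, and in particular it
is a closed 1-form (`dω = 0`, expressed via the antisymmetrized derivative
against constant vector fields). -/
theorem Xflat_eq_du :
    (∀ (p v : Fin 5 → ℝ), Xvec p ⬝ᵥ (gMat p).mulVec v = v 4) ∧
    (∀ (p v w : Fin 5 → ℝ),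
      fderiv ℝ (fun q => Xvec q ⬝ᵥ (gMat q).mulVec w) p v
        - fderiv ℝ (fun q => Xvec q ⬝ᵥ (gMat q).mulVec v) p w = 0) := by
  refine ⟨Xflat_eq_du_pointwise, fun p v w => ?_⟩
  have h1 : (fun q => Xvec q ⬝ᵥ (gMat q).mulVec w) = fun _ => w 4 :=
    funext fun q => Xflat_eq_du_pointwise q w
  have h2 : (fun q => Xvec q ⬝ᵥ (gMat q).mulVec v) = fun _ => v 4 :=
    funext fun q => Xflat_eq_du_pointwise q v
  rw [h1, h2, fderiv_fun_const]
  simp
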